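/- Let A be a C*-algebra, D an abelian C*-subalgebra of A containing an approximate unit for A, and n a normaliser of D in A (so that n*n, nn* ∈ D). Then there is a unique homeomorphism α_n : supp°(n*n) → supp°(nn*) such that φ(n*n) · α_n(φ)(d) = φ(n*dn) for all φ ∈ supp°(n*n) and all d ∈ D. -/

import Mathlib

open WeakDual Filter Topology

universe u

/-- `D` contains an approximate unit for `A`: a net `(e_i)` in `D` with
`e_i a → a` and `a e_i → a` for all `a ∈ A`. -/
def HasApproxUnit {A : Type u} [NonUnitalCStarAlgebra A]
    (D : NonUnitalStarSubalgebra ℂ A) : Prop :=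
  ∃ (ι : Type u) (l : Filter ι) (e : ι → A), l.NeBot ∧ (∀ i, e i ∈ D) ∧
    ∀ a : A, Tendsto (fun i => e i * a) l (𝓝 a) ∧ Tendsto (fun i => a * e i) l (𝓝 a)

/-- `n` is a normaliser of `D` in `A`: `nDn* ⊆ D` and `n*Dn ⊆ D`. -/
def IsNormalizer {A : Type u} [NonUnitalCStarAlgebra A]
    (D : NonUnitalStarSubalgebra ℂ A) (n : A) : Prop :=
  ∀ d ∈ D, n * d * star n ∈ D ∧ star n * d * n ∈ D

/-- `supp°(d) = {φ ∈ D̂ : φ(d) ≠ 0}`, an open subset of the character space of `D`. -/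
def suppo {A : Type u} [NonUnitalCStarAlgebra A] (D : NonUnitalStarSubalgebra ℂ A)
    (d : D) : Set ↥(characterSpace ℂ D) :=
  {φ | φ.1 d ≠ 0}

/-- `e` is the partial homeomorphism `α_n : supp°(n*n) → supp°(nn*)` of the character
space of `D` determined by `φ(n*n)·(α_n φ)(d) = φ(n*dn)` for `φ ∈ supp°(n*n)`, `d ∈ D`. -/
def IsAlphaFor {A : Type u} [NonUnitalCStarAlgebra A] (D : NonUnitalStarSubalgebra ℂ A)
    (n : A) (e : PartialHomeomorph ↥(characterSpace ℂ D) ↥(characterSpace ℂ D)) : Prop :=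
  ∀ (h1 : star n * n ∈ D) (h2 : n * star n ∈ D),
    e.source = suppo D ⟨star n * n, h1⟩ ∧ e.target = suppo D ⟨n * star n, h2⟩ ∧
    ∀ φ ∈ e.source, ∀ (d : D) (hd : star n * (d : A) * n ∈ D),
      φ.1 ⟨star n * n, h1⟩ * (e φ).1 d = φ.1 ⟨star n * (d : A) * n, hd⟩


section AlphaAux

variable {A : Type u} [NonUnitalCStarAlgebra A] {D : NonUnitalStarSubalgebra ℂ A}

theorem aux_conj_mul (hab : ∀ a ∈ D, ∀ b ∈ D, a * b = b * a) {p q : A}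
    (hpq : p * q ∈ D) (hqp : q * p ∈ D) (h : ∀ d ∈ D, p * d * q ∈ D) (x y : ↥D) :
    (⟨p * x * q, h x x.2⟩ : ↥D) * ⟨p * y * q, h y y.2⟩
      = ⟨p * q, hpq⟩ * ⟨p * ((x : A) * y) * q, h _ (mul_mem x.2 y.2)⟩ := by
  apply Subtype.ext
  show (p * x * q) * (p * y * q) = (p * q) * (p * ((x : A) * y) * q)
  have hc : (x : A) * (q * p) = (q * p) * x := hab x x.2 _ hqp
  calc (p * x * q) * (p * y * q) = p * ((x : A) * (q * p)) * ((y : A) * q) := by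
        simp only [mul_assoc]
    _ = p * ((q * p) * x) * ((y : A) * q) := by rw [hc]
    _ = (p * q) * (p * ((x : A) * y) * q) := by simp only [mul_assoc]

theorem aux_conj_qp {p q : A} (hpq : p * q ∈ D) (hqp : q * p ∈ D)
    (h : ∀ d ∈ D, p * d * q ∈ D) :
    (⟨p * (q * p) * q, h _ hqp⟩ : ↥D) = ⟨p * q, hpq⟩ * ⟨p * q, hpq⟩ := by
  apply Subtype.ext
  show p * (q * p) * q = (p * q) * (p * q)
  simp only [mul_assoc]

theorem aux_sandwich {p q : A} (hpq : p * q ∈ D) (h : ∀ d ∈ D, p * d * q ∈ D)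
    (d : ↥D) (hin : q * (d : A) * p ∈ D) :
    (⟨p * (q * (d : A) * p) * q, h _ hin⟩ : ↥D) = ⟨p * q, hpq⟩ * d * ⟨p * q, hpq⟩ := by
  apply Subtype.ext
  show p * (q * (d : A) * p) * q = (p * q) * (d : A) * (p * q)
  simp only [mul_assoc]

/-- The conjugation map `d ↦ p d q` as a continuous linear map on `D`. -/
noncomputable def conjL (D : NonUnitalStarSubalgebra ℂ A) (p q : A)
    (h : ∀ d ∈ D, p * d * q ∈ D) : ↥D →L[ℂ] ↥D :=
  { toFun := fun d => ⟨p * (d : A) * q, h d d.2⟩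
    map_add' := fun x y => Subtype.ext <| by
      push_cast
      simp [mul_add, add_mul]
    map_smul' := fun c x => Subtype.ext <| by
      push_cast
      simp [mul_smul_comm, smul_mul_assoc]
    cont := Continuous.subtype_mk
      ((continuous_const.mul continuous_subtype_val).mul continuous_const) _ }

/-- The functional `d ↦ φ(pq)⁻¹ φ(p d q)`. -/
noncomputable def wchar (D : NonUnitalStarSubalgebra ℂ A) (p q : A) (hpq : p * q ∈ D)
    (h : ∀ d ∈ D, p * d * q ∈ D) (φ : ↥(characterSpace ℂ D)) : WeakDual ℂ ↥D :=
  (φ.1 ⟨p * q, hpq⟩)⁻¹ • (ContinuousLinearMap.comp (φ.1 : ↥D →L[ℂ] ℂ) (conjL D p q h))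

theorem wchar_apply (D : NonUnitalStarSubalgebra ℂ A) (p q : A) (hpq : p * q ∈ D)
    (h : ∀ d ∈ D, p * d * q ∈ D) (φ : ↥(characterSpace ℂ D)) (d : ↥D) :
    wchar D p q hpq h φ d = (φ.1 ⟨p * q, hpq⟩)⁻¹ * φ.1 ⟨p * (d : A) * q, h d d.2⟩ := rfl

theorem wchar_qp {p q : A} (hpq : p * q ∈ D) (hqp : q * p ∈ D)
    (h : ∀ d ∈ D, p * d * q ∈ D) (φ : ↥(characterSpace ℂ D)) :
    wchar D p q hpq h φ ⟨q * p, hqp⟩ = φ.1 ⟨p * q, hpq⟩ := by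
  have := wchar_apply D p q hpq h φ ⟨q * p, hqp⟩
  rw [this]
  have h2 : φ.1 ⟨p * (q * p) * q, h _ hqp⟩ = φ.1 ⟨p * q, hpq⟩ * φ.1 ⟨p * q, hpq⟩ := by
    rw [show (⟨p * (q * p) * q, h _ hqp⟩ : ↥D) = ⟨p * q, hpq⟩ * ⟨p * q, hpq⟩ from
      aux_conj_qp hpq hqp h]
    exact φ.2.2 _ _
  rw [show φ.1 ⟨p * ((⟨q * p, hqp⟩ : ↥D) : A) * q, h _ (Subtype.mem _)⟩
      = φ.1 ⟨p * (q * p) * q, h _ hqp⟩ from rfl, h2]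
  rcases eq_or_ne (φ.1 ⟨p * q, hpq⟩) 0 with h0 | h0
  · simp [h0]
  · field_simp

theorem wchar_mem (hab : ∀ a ∈ D, ∀ b ∈ D, a * b = b * a) {p q : A}
    (hpq : p * q ∈ D) (hqp : q * p ∈ D) (h : ∀ d ∈ D, p * d * q ∈ D)
    {φ : ↥(characterSpace ℂ D)} (hφ : φ.1 ⟨p * q, hpq⟩ ≠ 0) :
    wchar D p q hpq h φ ∈ characterSpace ℂ D := by
  refine ⟨fun h0 => hφ ?_, fun x y => ?_⟩
  · have := wchar_qp hpq hqp h φ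
    rw [h0] at this
    exact this.symm
  · have hm := φ.2.2 (⟨p * x * q, h x x.2⟩ : ↥D) ⟨p * y * q, h y y.2⟩
    rw [aux_conj_mul hab hpq hqp h x y, φ.2.2] at hm
    rw [wchar_apply, wchar_apply, wchar_apply]
    rw [show φ.1 ⟨p * ((x * y : ↥D) : A) * q, h _ (x * y).2⟩
        = φ.1 ⟨p * ((x : A) * y) * q, h _ (mul_mem x.2 y.2)⟩ from rfl]
    have key : φ.1 ⟨p * ((x : A) * y) * q, h _ (mul_mem x.2 y.2)⟩
        = (φ.1 ⟨p * q, hpq⟩)⁻¹ * (φ.1 ⟨p * x * q, h x x.2⟩ * φ.1 ⟨p * y * q, h y y.2⟩) := by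
      rw [← hm, inv_mul_cancel_left₀ hφ]
    rw [key]; ring

theorem suppo_open (D : NonUnitalStarSubalgebra ℂ A) (d : ↥D) : IsOpen (suppo D d) := by
  have hc : Continuous fun φ : ↥(characterSpace ℂ D) => φ.1 d :=
    (WeakDual.eval_continuous d).comp continuous_subtype_val
  exact isOpen_compl_singleton.preimage hc

/-- `α` as a total map on the character space (identity off `supp°(pq)`). -/
noncomputable def alphaF (D : NonUnitalStarSubalgebra ℂ A)
    (hab : ∀ a ∈ D, ∀ b ∈ D, a * b = b * a) (p q : A) (hpq : p * q ∈ D) (hqp : q * p ∈ D)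
    (h : ∀ d ∈ D, p * d * q ∈ D) (φ : ↥(characterSpace ℂ D)) : ↥(characterSpace ℂ D) :=
  if hφ : φ.1 ⟨p * q, hpq⟩ ≠ 0 then ⟨wchar D p q hpq h φ, wchar_mem hab hpq hqp h hφ⟩ else φ

theorem alphaF_pos (D : NonUnitalStarSubalgebra ℂ A)
    (hab : ∀ a ∈ D, ∀ b ∈ D, a * b = b * a) (p q : A) (hpq : p * q ∈ D) (hqp : q * p ∈ D)
    (h : ∀ d ∈ D, p * d * q ∈ D) {φ : ↥(characterSpace ℂ D)}
    (hφ : φ.1 ⟨p * q, hpq⟩ ≠ 0) :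
    alphaF D hab p q hpq hqp h φ = ⟨wchar D p q hpq h φ, wchar_mem hab hpq hqp h hφ⟩ :=
  dif_pos hφ

theorem alphaF_apply (D : NonUnitalStarSubalgebra ℂ A)
    (hab : ∀ a ∈ D, ∀ b ∈ D, a * b = b * a) (p q : A) (hpq : p * q ∈ D) (hqp : q * p ∈ D)
    (h : ∀ d ∈ D, p * d * q ∈ D) {φ : ↥(characterSpace ℂ D)}
    (hφ : φ.1 ⟨p * q, hpq⟩ ≠ 0) (d : ↥D) :
    (alphaF D hab p q hpq hqp h φ).1 d
      = (φ.1 ⟨p * q, hpq⟩)⁻¹ * φ.1 ⟨p * (d : A) * q, h d d.2⟩ := by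
  rw [alphaF_pos D hab p q hpq hqp h hφ]
  exact wchar_apply D p q hpq h φ d

theorem alphaF_qp (D : NonUnitalStarSubalgebra ℂ A)
    (hab : ∀ a ∈ D, ∀ b ∈ D, a * b = b * a) (p q : A) (hpq : p * q ∈ D) (hqp : q * p ∈ D)
    (h : ∀ d ∈ D, p * d * q ∈ D) {φ : ↥(characterSpace ℂ D)}
    (hφ : φ.1 ⟨p * q, hpq⟩ ≠ 0) :
    (alphaF D hab p q hpq hqp h φ).1 ⟨q * p, hqp⟩ = φ.1 ⟨p * q, hpq⟩ := by
  rw [alphaF_pos D hab p q hpq hqp h hφ]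
  exact wchar_qp hpq hqp h φ

theorem alphaF_left_inv (D : NonUnitalStarSubalgebra ℂ A)
    (hab : ∀ a ∈ D, ∀ b ∈ D, a * b = b * a) (p q : A) (hpq : p * q ∈ D) (hqp : q * p ∈ D)
    (h : ∀ d ∈ D, p * d * q ∈ D) (h' : ∀ d ∈ D, q * d * p ∈ D)
    {φ : ↥(characterSpace ℂ D)} (hφ : φ.1 ⟨p * q, hpq⟩ ≠ 0) :
    alphaF D hab q p hqp hpq h' (alphaF D hab p q hpq hqp h φ) = φ := by
  set ψ := alphaF D hab p q hpq hqp h φ with hψdef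
  have hψ : ψ.1 ⟨q * p, hqp⟩ ≠ 0 := by
    rw [hψdef, alphaF_qp D hab p q hpq hqp h hφ]; exact hφ
  apply Subtype.ext
  apply DFunLike.ext
  intro d
  have e1 : (alphaF D hab q p hqp hpq h' ψ).1 d
      = (ψ.1 ⟨q * p, hqp⟩)⁻¹ * ψ.1 ⟨q * (d : A) * p, h' d d.2⟩ :=
    alphaF_apply D hab q p hqp hpq h' hψ d
  have e2 : ψ.1 ⟨q * (d : A) * p, h' d d.2⟩
      = (φ.1 ⟨p * q, hpq⟩)⁻¹ * φ.1 ⟨p * (q * (d : A) * p) * q, h _ (h' d d.2)⟩ :=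
    alphaF_apply D hab p q hpq hqp h hφ ⟨q * (d : A) * p, h' d d.2⟩
  have e3 : φ.1 ⟨p * (q * (d : A) * p) * q, h _ (h' d d.2)⟩
      = φ.1 ⟨p * q, hpq⟩ * φ.1 d * φ.1 ⟨p * q, hpq⟩ := by
    rw [aux_sandwich hpq h d (h' d d.2), φ.2.2, φ.2.2]
  rw [e1, e2, e3, alphaF_qp D hab p q hpq hqp h hφ,
    mul_assoc (φ.1 ⟨p * q, hpq⟩) (φ.1 d), inv_mul_cancel_left₀ hφ, mul_comm (φ.1 d),
    inv_mul_cancel_left₀ hφ]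

theorem alphaF_continuousOn (D : NonUnitalStarSubalgebra ℂ A)
    (hab : ∀ a ∈ D, ∀ b ∈ D, a * b = b * a) (p q : A) (hpq : p * q ∈ D) (hqp : q * p ∈ D)
    (h : ∀ d ∈ D, p * d * q ∈ D) :
    ContinuousOn (alphaF D hab p q hpq hqp h) (suppo D ⟨p * q, hpq⟩) := by
  rw [continuousOn_iff_continuous_restrict]
  have hres : (suppo D ⟨p * q, hpq⟩).domRestrict (alphaF D hab p q hpq hqp h)
      = fun φ : ↥(suppo D ⟨p * q, hpq⟩) =>
          (⟨wchar D p q hpq h φ.1, wchar_mem hab hpq hqp h φ.2⟩ : ↥(characterSpace ℂ D)) :=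
    funext fun φ => dif_pos φ.2
  rw [hres]
  apply Continuous.subtype_mk
  apply WeakDual.continuous_of_continuous_eval
  intro d
  have heval : ∀ x : ↥D, Continuous fun φ : ↥(suppo D ⟨p * q, hpq⟩) => φ.1.1 x := fun x =>
    (WeakDual.eval_continuous x).comp (continuous_subtype_val.comp continuous_subtype_val)
  simp only [wchar_apply]
  exact ((heval _).inv₀ fun φ => φ.2).mul (heval _)

/-- The partial homeomorphism `α : supp°(pq) → supp°(qp)`. -/
noncomputable def alphaHomeo (D : NonUnitalStarSubalgebra ℂ A)
    (hab : ∀ a ∈ D, ∀ b ∈ D, a * b = b * a) (p q : A) (hpq : p * q ∈ D) (hqp : q * p ∈ D)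
    (h : ∀ d ∈ D, p * d * q ∈ D) (h' : ∀ d ∈ D, q * d * p ∈ D) :
    PartialHomeomorph ↥(characterSpace ℂ D) ↥(characterSpace ℂ D) where
  toFun := alphaF D hab p q hpq hqp h
  invFun := alphaF D hab q p hqp hpq h'
  source := suppo D ⟨p * q, hpq⟩
  target := suppo D ⟨q * p, hqp⟩
  map_source' := fun φ hφ => by
    have hφ' : φ.1 ⟨p * q, hpq⟩ ≠ 0 := hφ
    show (alphaF D hab p q hpq hqp h φ).1 ⟨q * p, hqp⟩ ≠ 0
    rw [alphaF_qp D hab p q hpq hqp h hφ']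
    exact hφ'
  map_target' := fun φ hφ => by
    have hφ' : φ.1 ⟨q * p, hqp⟩ ≠ 0 := hφ
    show (alphaF D hab q p hqp hpq h' φ).1 ⟨p * q, hpq⟩ ≠ 0
    rw [alphaF_qp D hab q p hqp hpq h' hφ']
    exact hφ'
  left_inv' := fun φ hφ => alphaF_left_inv D hab p q hpq hqp h h' hφ
  right_inv' := fun φ hφ => alphaF_left_inv D hab q p hqp hpq h' h hφ
  continuousOn_toFun := alphaF_continuousOn D hab p q hpq hqp h
  continuousOn_invFun := alphaF_continuousOn D hab q p hqp hpq h'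

theorem alphaHomeo_coe (D : NonUnitalStarSubalgebra ℂ A)
    (hab : ∀ a ∈ D, ∀ b ∈ D, a * b = b * a) (p q : A) (hpq : p * q ∈ D) (hqp : q * p ∈ D)
    (h : ∀ d ∈ D, p * d * q ∈ D) (h' : ∀ d ∈ D, q * d * p ∈ D) :
    ⇑(alphaHomeo D hab p q hpq hqp h h') = alphaF D hab p q hpq hqp h := rfl

end AlphaAux

theorem stmt12 {A : Type u} [NonUnitalCStarAlgebra A]
    (D : NonUnitalStarSubalgebra ℂ A) (hDc : IsClosed (D : Set A))
    (hab : ∀ a ∈ D, ∀ b ∈ D, a * b = b * a)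
    (hau : HasApproxUnit D)
    (n : A) (hn : IsNormalizer D n)
    (hn1 : star n * n ∈ D) (hn2 : n * star n ∈ D) :
    ∃ e : PartialHomeomorph ↥(characterSpace ℂ D) ↥(characterSpace ℂ D),
      IsAlphaFor D n e ∧
      ∀ e' : PartialHomeomorph ↥(characterSpace ℂ D) ↥(characterSpace ℂ D),
        IsAlphaFor D n e' → Set.EqOn (⇑e') (⇑e) e.source := by
  have hcon : ∀ d ∈ D, star n * d * n ∈ D := fun d hd => (hn d hd).2
  have hcon' : ∀ d ∈ D, n * d * star n ∈ D := fun d hd => (hn d hd).1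
  set e : PartialHomeomorph ↥(characterSpace ℂ D) ↥(characterSpace ℂ D) :=
    alphaHomeo D hab (star n) n hn1 hn2 hcon hcon' with he
  have halpha : IsAlphaFor D n e := by
    intro h1 h2
    refine ⟨rfl, rfl, fun φ hφ d hd => ?_⟩
    have hφ' : φ.1 ⟨star n * n, hn1⟩ ≠ 0 := hφ
    have happ : (e φ).1 d
        = (φ.1 ⟨star n * n, hn1⟩)⁻¹ * φ.1 ⟨star n * (d : A) * n, hcon d d.2⟩ := by
      rw [he, alphaHomeo_coe]
      exact alphaF_apply D hab (star n) n hn1 hn2 hcon hφ' d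
    rw [show φ.1 ⟨star n * n, h1⟩ = φ.1 ⟨star n * n, hn1⟩ from rfl, happ,
      mul_inv_cancel_left₀ hφ']
  refine ⟨e, halpha, fun e' he' φ hφ => ?_⟩
  obtain ⟨hs, -, hk⟩ := halpha hn1 hn2
  obtain ⟨hs', -, hk'⟩ := he' hn1 hn2
  have hφs : φ ∈ suppo D ⟨star n * n, hn1⟩ := hs ▸ hφ
  have hφ0 : φ.1 ⟨star n * n, hn1⟩ ≠ 0 := hφs
  have hφ' : φ ∈ e'.source := hs' ▸ hφs
  apply Subtype.ext
  apply DFunLike.ext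
  intro d
  exact mul_left_cancel₀ hφ0
    ((hk' φ hφ' d (hcon d d.2)).trans (hk φ hφ d (hcon d d.2)).symm)
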